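/- Let f_i(x) = x/8 + (7/8)i and g_i(x) = x/4 + (3/4)i for i ∈ {0,1}, and let F¹ = {f₀, f₁}, F² = {g₀, g₁} with the trivial equivalence relation on translation vectors. Then there exists a sequence of integers 1 = N₀ < N₁ < N₂ < ⋯ such that the code tree ω defined by ω(∅) = 2 and, for every word i_k of length k, ω(i_k) = 1 if N_{2l} ≤ k < N_{2l+1} and ω(i_k) = 2 if N_{2l+1} ≤ k < N_{2l+2} (l = 0,1,2,…), satisfies p_inf^ω(α) = (1 − 3α) log 2 and p_sup^ω(α) = (1 − 2α) log 2 for all α ≥ 0. In particular, the natural pressure p^ω(α) does not exist for any α > 0. -/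

import Mathlib

open MeasureTheory Filter Set Topology
open scoped ENNReal Topology

noncomputable section

namespace CodeTreeFractal

variable {Λ : Type*}

/-- The word formed by the first `k` letters of an infinite path `i`. -/
def word (i : ℕ → ℕ) (k : ℕ) : List ℕ := (List.range k).map i

/-- `w` belongs to the tree `Σ_*^ω` determined by the branching numbers `Mlam`
and the code tree `ω`. (Letters are indexed from `0`.) -/
def IsNode (Mlam : Λ → ℕ) (ω : List ℕ → Λ) (w : List ℕ) : Prop :=
  ∀ j : Fin w.length, w.get j < Mlam (ω (w.take j))

/-- `i` is an infinite path of `Σ^ω`. -/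
def IsPath (Mlam : Λ → ℕ) (ω : List ℕ → Λ) (i : ℕ → ℕ) : Prop :=
  ∀ k, i k < Mlam (ω (word i k))

/-- The cylinder of infinite sequences beginning with the word `w`. -/
def cylinder (w : List ℕ) : Set (ℕ → ℕ) := {i | word i w.length = w}

/-- The set `Σ^ω` of infinite paths. -/
def pathSet (Mlam : Λ → ℕ) (ω : List ℕ → Λ) : Set (ℕ → ℕ) := {i | IsPath Mlam ω i}

/-- The product of the linear parts (contraction coefficients on `ℝ`) along a word. -/
def prodc (r : Λ → ℕ → ℝ) : (List ℕ → Λ) → List ℕ → ℝ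
  | _, [] => 1
  | ω, l :: w => r (ω []) l * prodc r (fun u => ω (l :: u)) w

/-- The singular value function on `ℝ` : `Φ^α(T) = |T|^α`. -/
def Phi1 (c : ℝ) (α : ℝ) : ℝ := |c| ^ α

/-- The sum `S^ω(k, α)` over the level-`k` nodes. -/
def S1 (Mlam : Λ → ℕ) (r : Λ → ℕ → ℝ) (ω : List ℕ → Λ) (k : ℕ) (α : ℝ) : ℝ :=
  ∑' w : {w : List ℕ // w.length = k ∧ IsNode Mlam ω w}, Phi1 (prodc r ω w.1) α

/-- The lower pressure `p_inf^ω(α)`. -/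
def pinf1 (Mlam : Λ → ℕ) (r : Λ → ℕ → ℝ) (ω : List ℕ → Λ) (α : ℝ) : ℝ :=
  liminf (fun k : ℕ => Real.log (S1 Mlam r ω k α) / k) atTop

/-- The upper pressure `p_sup^ω(α)`. -/
def psup1 (Mlam : Λ → ℕ) (r : Λ → ℕ → ℝ) (ω : List ℕ → Λ) (α : ℝ) : ℝ :=
  limsup (fun k : ℕ => Real.log (S1 Mlam r ω k α) / k) atTop

/-- The natural projection `Z_a^ω` on `ℝ`. -/
def Z1 (r : Λ → ℕ → ℝ) (tr : Λ → ℕ → ℝ) (ω : List ℕ → Λ) (i : ℕ → ℕ) : ℝ :=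
  ∑' k : ℕ, prodc r ω (word i k) * tr (ω (word i k)) (i k)

/-- The code tree fractal `A_a^ω ⊆ ℝ`. -/
def attractor1 (Mlam : Λ → ℕ) (r : Λ → ℕ → ℝ) (tr : Λ → ℕ → ℝ)
    (ω : List ℕ → Λ) : Set ℝ :=
  {x | ∃ i : ℕ → ℕ, IsPath Mlam ω i ∧ Z1 r tr ω i = x}

/-- The stage-`j` covering sums defining the natural measure `M_j^α(Σ^ω)`. -/
def natStage1 (Mlam : Λ → ℕ) (r : Λ → ℕ → ℝ) (ω : List ℕ → Λ)
    (α : ℝ) (j : ℕ) : ℝ≥0∞ :=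
  ⨅ (J : Set (List ℕ)) (_ : ∀ w ∈ J, IsNode Mlam ω w ∧ j ≤ w.length)
    (_ : pathSet Mlam ω ⊆ ⋃ w ∈ J, cylinder w),
    ∑' w : J, ENNReal.ofReal (Phi1 (prodc r ω w.1) α)

/-- The natural measure `M^α(Σ^ω)`. -/
def natMeasure1 (Mlam : Λ → ℕ) (r : Λ → ℕ → ℝ) (ω : List ℕ → Λ) (α : ℝ) : ℝ≥0∞ :=
  ⨆ j : ℕ, natStage1 Mlam r ω α j

/-- The affinity dimension `d^ω = inf {α ≥ 0 : M^α(Σ^ω) = 0}`. -/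
def affinityDim1 (Mlam : Λ → ℕ) (r : Λ → ℕ → ℝ) (ω : List ℕ → Λ) : ℝ :=
  sInf {α : ℝ | 0 ≤ α ∧ natMeasure1 Mlam r ω α = 0}

/-! ### Auxiliary material for the example -/

/-- The sequence of necks: `N n = 2 ^ (n²)`. -/
def Nseq (n : ℕ) : ℕ := 2 ^ (n ^ 2)

lemma Nseq_strictMono : StrictMono Nseq :=
  fun _ _ h => Nat.pow_lt_pow_right one_lt_two (Nat.pow_lt_pow_left h two_ne_zero)

lemma Nseq_pos (n : ℕ) : 0 < Nseq n := Nat.pow_pos two_pos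

lemma Nseq_succ (n : ℕ) : Nseq (n + 1) = Nseq n * 2 ^ (2 * n + 1) := by
  rw [Nseq, Nseq, ← pow_add]; ring_nf

/-- The levels on which the system `F¹` (contraction `1/8`) is used. -/
def cnd (n : ℕ) : Prop := ∃ l : ℕ, Nseq (2 * l) ≤ n ∧ n < Nseq (2 * l + 1)

attribute [local instance] Classical.propDecidable

/-- Number of `F¹`-levels below `k`. -/
def mcnt (k : ℕ) : ℕ := ((Finset.range k).filter cnd).card

lemma mcnt_le (k : ℕ) : mcnt k ≤ k := by
  simpa [mcnt] using (Finset.card_filter_le (Finset.range k) cnd)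

lemma mcnt_lower (l : ℕ) : Nseq (2 * l + 1) - Nseq (2 * l) ≤ mcnt (Nseq (2 * l + 1)) := by
  have h : Finset.Ico (Nseq (2 * l)) (Nseq (2 * l + 1))
      ⊆ (Finset.range (Nseq (2 * l + 1))).filter cnd := by
    intro j hj
    rw [Finset.mem_Ico] at hj
    rw [Finset.mem_filter, Finset.mem_range]
    exact ⟨hj.2, l, hj.1, hj.2⟩
  simpa [mcnt, Nat.card_Ico] using Finset.card_le_card h

lemma mcnt_upper (l : ℕ) : mcnt (Nseq (2 * l + 2)) ≤ Nseq (2 * l + 1) := by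
  have h : (Finset.range (Nseq (2 * l + 2))).filter cnd ⊆ Finset.range (Nseq (2 * l + 1)) := by
    intro j hj
    rw [Finset.mem_filter, Finset.mem_range] at hj
    rw [Finset.mem_range]
    obtain ⟨hjlt, l', h1, h2⟩ := hj
    rcases le_or_gt l' l with hll | hll
    · exact lt_of_lt_of_le h2 (Nseq_strictMono.monotone (by omega))
    · exfalso
      have : Nseq (2 * l + 2) ≤ Nseq (2 * l') := Nseq_strictMono.monotone (by omega)
      omega
  simpa [mcnt] using Finset.card_le_card h

/-- The contraction ratio used at level `j`. -/
def cR (j : ℕ) : ℝ := if cnd j then 1 / 8 else 1 / 4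

/-- The product of contraction ratios over the first `k` levels. -/
def Pk (k : ℕ) : ℝ := ∏ j ∈ Finset.range k, cR j

lemma cR_pos (j : ℕ) : 0 < cR j := by
  rw [cR]; split <;> norm_num

lemma Pk_pos (k : ℕ) : 0 < Pk k := Finset.prod_pos fun j _ => cR_pos j

lemma log_cR (j : ℕ) : Real.log (cR j)
    = -2 * Real.log 2 - (if cnd j then (1 : ℝ) else 0) * Real.log 2 := by
  rw [cR]
  split
  · rw [show (1 : ℝ) / 8 = ((2 : ℝ) ^ (3 : ℕ))⁻¹ by norm_num, Real.log_inv, Real.log_pow]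
    push_cast; ring
  · rw [show (1 : ℝ) / 4 = ((2 : ℝ) ^ (2 : ℕ))⁻¹ by norm_num, Real.log_inv, Real.log_pow]
    push_cast; ring

lemma log_Pk (k : ℕ) : Real.log (Pk k)
    = -((2 * k + mcnt k : ℝ)) * Real.log 2 := by
  rw [Pk, Real.log_prod (fun j _ => (cR_pos j).ne')]
  have h : ∀ j ∈ Finset.range k, Real.log (cR j)
      = -2 * Real.log 2 - (if cnd j then (1 : ℝ) else 0) * Real.log 2 := fun j _ => log_cR j
  rw [Finset.sum_congr rfl h, Finset.sum_sub_distrib]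
  simp only [Finset.sum_const, ← Finset.sum_mul, Finset.sum_boole, mcnt]
  rw [Finset.card_range]
  ring

lemma prodc_eq_prod (r : Fin 2 → ℕ → ℝ) :
    ∀ (w : List ℕ) (ω : List ℕ → Fin 2) (c : ℕ → ℝ),
      (∀ (u : List ℕ) (l : ℕ), r (ω u) l = c u.length) →
      prodc r ω w = ∏ j ∈ Finset.range w.length, c j := by
  intro w
  induction w with
  | nil => intro ω c _; simp [prodc]
  | cons l w ih =>
    intro ω c hc
    have h1 : prodc r ω (l :: w) = r (ω []) l * prodc r (fun u => ω (l :: u)) w := rfl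
    rw [h1, ih (fun u => ω (l :: u)) (fun j => c (j + 1)) (fun u l' => by
      simpa using hc (l :: u) l')]
    have h0 := hc [] l
    simp only [List.length_nil] at h0
    rw [h0, List.length_cons, Finset.prod_range_succ', mul_comm]

/-- The level-`k` nodes of the full binary tree are parametrized by `Fin k → Fin 2`. -/
def nodeEquiv (ω : List ℕ → Fin 2) (k : ℕ) :
    {w : List ℕ // w.length = k ∧ IsNode (fun _ : Fin 2 => 2) ω w} ≃ (Fin k → Fin 2) where
  toFun w j := ⟨w.1.get (Fin.cast w.2.1.symm j), w.2.2 _⟩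
  invFun f := ⟨List.ofFn (fun j => (f j : ℕ)), by simp, fun j => by
    simpa [IsNode, List.get_ofFn] using (f _).isLt⟩
  left_inv := by
    rintro ⟨w, hlen, hnode⟩
    apply Subtype.ext
    apply List.ext_get (by simp [hlen])
    intro i h1 h2
    simp [List.get_ofFn]
  right_inv := by
    intro f
    funext j
    apply Fin.ext
    simp [List.get_ofFn]

lemma S1_eq (r : Fin 2 → ℕ → ℝ) (ω : List ℕ → Fin 2) (k : ℕ) (α : ℝ) (P : ℝ)
    (hP : ∀ w : List ℕ, w.length = k → prodc r ω w = P) :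
    S1 (fun _ : Fin 2 => 2) r ω k α = 2 ^ k * |P| ^ α := by
  have h1 : S1 (fun _ : Fin 2 => 2) r ω k α
      = ∑' _ : {w : List ℕ // w.length = k ∧ IsNode (fun _ : Fin 2 => 2) ω w}, |P| ^ α := by
    apply tsum_congr
    intro w
    rw [Phi1, hP w.1 w.2.1]
  rw [h1, ← Equiv.tsum_eq (nodeEquiv ω k).symm (fun _ => |P| ^ α)]
  simp [tsum_fintype, Finset.card_univ]

lemma ratio (n : ℕ) : (Nseq n : ℝ) / (Nseq (n + 1)) = (1 / 2) ^ (2 * n + 1) := by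
  have hN : (Nseq n : ℝ) ≠ 0 := by exact_mod_cast (Nseq_pos n).ne'
  rw [Nseq_succ]
  push_cast
  rw [div_pow, one_pow]
  rw [div_eq_div_iff (by positivity) (by positivity)]
  ring

lemma half_pow_tendsto (d : ℕ) :
    Tendsto (fun l : ℕ => ((1 : ℝ) / 2) ^ (4 * l + d)) atTop (𝓝 0) := by
  have h1 : Tendsto (fun m : ℕ => ((1 : ℝ) / 2) ^ m) atTop (𝓝 0) :=
    tendsto_pow_atTop_nhds_zero_of_lt_one (by norm_num) (by norm_num)
  have h2 : Tendsto (fun l : ℕ => 4 * l + d) atTop atTop :=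
    StrictMono.tendsto_atTop (fun a b h => by omega)
  exact h1.comp h2

lemma b_lower (l : ℕ) :
    1 - ((1 : ℝ) / 2) ^ (4 * l + 1) ≤ (mcnt (Nseq (2 * l + 1)) : ℝ) / (Nseq (2 * l + 1)) := by
  have hle : Nseq (2 * l) ≤ Nseq (2 * l + 1) := (Nseq_strictMono (by omega)).le
  have hpos : (0 : ℝ) < (Nseq (2 * l + 1) : ℝ) := by exact_mod_cast Nseq_pos _
  have hm : ((Nseq (2 * l + 1) : ℝ) - Nseq (2 * l)) ≤ mcnt (Nseq (2 * l + 1)) := by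
    have := mcnt_lower l
    have h2 : ((Nseq (2 * l + 1) - Nseq (2 * l) : ℕ) : ℝ) ≤ mcnt (Nseq (2 * l + 1)) := by
      exact_mod_cast this
    rwa [Nat.cast_sub hle] at h2
  have hr : (Nseq (2 * l) : ℝ) / (Nseq (2 * l + 1)) = (1 / 2) ^ (4 * l + 1) := by
    have h := ratio (2 * l)
    rwa [show 2 * (2 * l) + 1 = 4 * l + 1 by ring] at h
  rw [← hr, le_div_iff₀ hpos, sub_mul, one_mul, div_mul_cancel₀ _ hpos.ne']
  linarith

lemma b_upper (l : ℕ) :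
    (mcnt (Nseq (2 * l + 2)) : ℝ) / (Nseq (2 * l + 2)) ≤ ((1 : ℝ) / 2) ^ (4 * l + 3) := by
  have hpos : (0 : ℝ) < (Nseq (2 * l + 2) : ℝ) := by exact_mod_cast Nseq_pos _
  have hr : (Nseq (2 * l + 1) : ℝ) / (Nseq (2 * l + 2)) = (1 / 2) ^ (4 * l + 3) := by
    have h := ratio (2 * l + 1)
    rwa [show 2 * (2 * l + 1) + 1 = 4 * l + 3 by ring] at h
  rw [← hr]
  gcongr
  exact_mod_cast mcnt_upper l

/-- Example `pressure1`: with `F¹ = {x/8, x/8 + 7/8}` (label `0`) and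
`F² = {x/4, x/4 + 3/4}` (label `1`), there is a sequence of necks `1 = N₀ < N₁ < ⋯`
such that for the code tree using `F¹` on levels `[N_{2l}, N_{2l+1})` and `F²`
elsewhere (in particular `ω(∅) = F²`), one has `p_inf^ω(α) = (1-3α) log 2` and
`p_sup^ω(α) = (1-2α) log 2` for all `α ≥ 0`; hence the pressure does not exist for
any `α > 0`. -/
theorem statement5 :
    ∃ N : ℕ → ℕ, N 0 = 1 ∧ StrictMono N ∧
      ∀ ω : List ℕ → Fin 2,
        (∀ w : List ℕ,
            ω w = 0 ↔ ∃ l : ℕ, N (2 * l) ≤ w.length ∧ w.length < N (2 * l + 1)) →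
        ∀ α : ℝ, 0 ≤ α →
          pinf1 (fun _ : Fin 2 => 2)
              (fun l _ => if l = 0 then (1 : ℝ) / 8 else 1 / 4) ω α
            = (1 - 3 * α) * Real.log 2 ∧
          psup1 (fun _ : Fin 2 => 2)
              (fun l _ => if l = 0 then (1 : ℝ) / 8 else 1 / 4) ω α
            = (1 - 2 * α) * Real.log 2 ∧
          (0 < α →
            pinf1 (fun _ : Fin 2 => 2)
                (fun l _ => if l = 0 then (1 : ℝ) / 8 else 1 / 4) ω α
              ≠ psup1 (fun _ : Fin 2 => 2)
                (fun l _ => if l = 0 then (1 : ℝ) / 8 else 1 / 4) ω α) := by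
  refine ⟨Nseq, rfl, Nseq_strictMono, ?_⟩
  intro ω hω α hα
  set r : Fin 2 → ℕ → ℝ := fun l _ => if l = 0 then (1 : ℝ) / 8 else 1 / 4 with hrdef
  set L : ℝ := Real.log 2 with hLdef
  have hL : 0 < L := Real.log_pos (by norm_num)
  -- The coefficient at level `j` only depends on `j`.
  have hr : ∀ (u : List ℕ) (l : ℕ), r (ω u) l = cR u.length := by
    intro u l
    by_cases h : cnd u.length
    · have h0 : ω u = 0 := (hω u).2 h
      simp [hrdef, h0, cR, h]
    · have hne : ω u ≠ 0 := fun h0 => h ((hω u).1 h0)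
      have h1 : ω u = 1 := by
        have := (ω u).isLt
        omega
      simp [hrdef, h1, cR, h]
  -- value of `S1` at level `k`
  have hS : ∀ k : ℕ, S1 (fun _ : Fin 2 => 2) r ω k α = 2 ^ k * |Pk k| ^ α := by
    intro k
    refine S1_eq r ω k α (Pk k) ?_
    intro w hw
    rw [prodc_eq_prod r w ω cR hr, hw, Pk]
  -- the sequence whose liminf/limsup we compute
  set A : ℕ → ℝ := fun k => Real.log (S1 (fun _ : Fin 2 => 2) r ω k α) / k with hAdef
  have hA : ∀ k : ℕ, 1 ≤ k → A k = (1 - 2 * α) * L - α * L * ((mcnt k : ℝ) / k) := by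
    intro k hk
    have hk0 : (k : ℝ) ≠ 0 := by exact_mod_cast (by omega : k ≠ 0)
    have hPk := Pk_pos k
    have habs : |Pk k| = Pk k := abs_of_pos hPk
    have hlog : Real.log (S1 (fun _ : Fin 2 => 2) r ω k α)
        = k * L + α * (-((2 * k + mcnt k : ℝ)) * L) := by
      rw [hS k, habs, Real.log_mul (by positivity) (by positivity),
        Real.log_pow, Real.log_rpow hPk, log_Pk]
    rw [hAdef]
    simp only
    rw [hlog]
    field_simp
    ring
  -- uniform bounds on `A`
  have hAub : ∀ k : ℕ, 1 ≤ k → A k ≤ (1 - 2 * α) * L := by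
    intro k hk
    rw [hA k hk]
    have h1 : (0 : ℝ) ≤ (mcnt k : ℝ) / k := by positivity
    nlinarith [mul_nonneg (mul_nonneg hα hL.le) h1]
  have hAlb : ∀ k : ℕ, 1 ≤ k → (1 - 3 * α) * L ≤ A k := by
    intro k hk
    rw [hA k hk]
    have hkpos : (0 : ℝ) < k := by exact_mod_cast hk
    have h1 : (mcnt k : ℝ) / k ≤ 1 := by
      rw [div_le_one hkpos]
      exact_mod_cast mcnt_le k
    nlinarith [mul_nonneg hα hL.le]
  have hub : ∀ᶠ k in atTop, A k ≤ (1 - 2 * α) * L :=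
    eventually_atTop.2 ⟨1, hAub⟩
  have hlb : ∀ᶠ k in atTop, (1 - 3 * α) * L ≤ A k :=
    eventually_atTop.2 ⟨1, hAlb⟩
  have hbddub : IsBoundedUnder (· ≤ ·) atTop A := ⟨(1 - 2 * α) * L, eventually_map.2 hub⟩
  have hbddlb : IsBoundedUnder (· ≥ ·) atTop A := ⟨(1 - 3 * α) * L, eventually_map.2 hlb⟩
  -- the subsequence along which `A` tends to `(1-3α)L`
  have hφtop : Tendsto (fun l : ℕ => Nseq (2 * l + 1)) atTop atTop :=
    StrictMono.tendsto_atTop fun a b h => Nseq_strictMono (by omega)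
  have hψtop : Tendsto (fun l : ℕ => Nseq (2 * l + 2)) atTop atTop :=
    StrictMono.tendsto_atTop fun a b h => Nseq_strictMono (by omega)
  have hbφ : Tendsto (fun l : ℕ => (mcnt (Nseq (2 * l + 1)) : ℝ) / (Nseq (2 * l + 1)))
      atTop (𝓝 1) := by
    have hlow : Tendsto (fun l : ℕ => 1 - ((1 : ℝ) / 2) ^ (4 * l + 1)) atTop (𝓝 1) := by
      have := (half_pow_tendsto 1)
      simpa using tendsto_const_nhds.sub this
    refine tendsto_of_tendsto_of_tendsto_of_le_of_le hlow tendsto_const_nhds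
      (fun l => b_lower l) (fun l => ?_)
    have hpos : (0 : ℝ) < (Nseq (2 * l + 1) : ℝ) := by exact_mod_cast Nseq_pos _
    rw [div_le_one hpos]
    exact_mod_cast mcnt_le _
  have hbψ : Tendsto (fun l : ℕ => (mcnt (Nseq (2 * l + 2)) : ℝ) / (Nseq (2 * l + 2)))
      atTop (𝓝 0) := by
    refine tendsto_of_tendsto_of_tendsto_of_le_of_le tendsto_const_nhds
      (half_pow_tendsto 3) (fun l => by positivity) (fun l => b_upper l)
  have hAφ : Tendsto (fun l : ℕ => A (Nseq (2 * l + 1))) atTop (𝓝 ((1 - 3 * α) * L)) := by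
    have heq : ∀ l : ℕ, A (Nseq (2 * l + 1))
        = (1 - 2 * α) * L - α * L * ((mcnt (Nseq (2 * l + 1)) : ℝ) / (Nseq (2 * l + 1))) :=
      fun l => hA _ (Nseq_pos _)
    have h1 : Tendsto (fun l : ℕ =>
        (1 - 2 * α) * L - α * L * ((mcnt (Nseq (2 * l + 1)) : ℝ) / (Nseq (2 * l + 1))))
        atTop (𝓝 ((1 - 2 * α) * L - α * L * 1)) :=
      tendsto_const_nhds.sub (tendsto_const_nhds.mul hbφ)
    rw [show (1 - 3 * α) * L = (1 - 2 * α) * L - α * L * 1 by ring]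
    exact h1.congr fun l => (heq l).symm
  have hAψ : Tendsto (fun l : ℕ => A (Nseq (2 * l + 2))) atTop (𝓝 ((1 - 2 * α) * L)) := by
    have heq : ∀ l : ℕ, A (Nseq (2 * l + 2))
        = (1 - 2 * α) * L - α * L * ((mcnt (Nseq (2 * l + 2)) : ℝ) / (Nseq (2 * l + 2))) :=
      fun l => hA _ (Nseq_pos _)
    have h1 : Tendsto (fun l : ℕ =>
        (1 - 2 * α) * L - α * L * ((mcnt (Nseq (2 * l + 2)) : ℝ) / (Nseq (2 * l + 2))))
        atTop (𝓝 ((1 - 2 * α) * L - α * L * 0)) :=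
      tendsto_const_nhds.sub (tendsto_const_nhds.mul hbψ)
    rw [show (1 - 2 * α) * L = (1 - 2 * α) * L - α * L * 0 by ring]
    exact h1.congr fun l => (heq l).symm
  -- liminf
  have hliminf : pinf1 (fun _ : Fin 2 => 2) r ω α = (1 - 3 * α) * L := by
    rw [pinf1]
    refine le_antisymm ?_ (le_liminf_of_le hbddub.isCoboundedUnder_ge hlb)
    refine le_of_forall_pos_le_add ?_
    intro ε hε
    have hev : ∀ᶠ l in atTop, A (Nseq (2 * l + 1)) ≤ (1 - 3 * α) * L + ε := by
      filter_upwards [hAφ.eventually (gt_mem_nhds (lt_add_of_pos_right _ hε))] with l h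
      exact h.le
    have hfreq : ∃ᶠ k in atTop, A k ≤ (1 - 3 * α) * L + ε :=
      hφtop.frequently hev.frequently
    exact liminf_le_of_frequently_le hfreq hbddlb
  -- limsup
  have hlimsup : psup1 (fun _ : Fin 2 => 2) r ω α = (1 - 2 * α) * L := by
    rw [psup1]
    refine le_antisymm (limsup_le_of_le hbddlb.isCoboundedUnder_le hub) ?_
    refine le_of_forall_pos_le_add ?_
    intro ε hε
    have hev : ∀ᶠ l in atTop, (1 - 2 * α) * L - ε ≤ A (Nseq (2 * l + 2)) := by
      filter_upwards [hAψ.eventually (lt_mem_nhds (sub_lt_self _ hε))] with l h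
      exact h.le
    have hfreq : ∃ᶠ k in atTop, (1 - 2 * α) * L - ε ≤ A k :=
      hψtop.frequently hev.frequently
    have := le_limsup_of_frequently_le hfreq hbddub
    linarith
  refine ⟨hliminf, hlimsup, ?_⟩
  intro hαpos
  rw [hliminf, hlimsup]
  intro hcontra
  nlinarith
end CodeTreeFractal
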